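/- Let q be a power of a prime p. Let S₁ = {c₀ + c₁q^{f} : f ∈ ℕ₀} and S₂ = {d₀ + d₁q^{g} : g ∈ ℕ₀} be elementary p-nested sets of order 1 in ℤ with c₁, d₁ ≠ 0. Then S₁ ∩ S₂ is a finite union of singletons and elementary p-nested sets of order at most 1. -/

import Mathlib

/-- `S ⊆ ℤ` is an elementary `p`-nested set of order at most 1 (with base `q`):
`S = {c₀ + c₁ q^f : f ∈ ℕ}` with `(q-1)cᵢ ∈ ℤ` and `c₀ + c₁ ∈ ℤ`. -/
def IsElemNestedOne (q : ℕ) (S : Set ℤ) : Prop :=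
  ∃ c₀ c₁ : ℚ,
    (∃ z : ℤ, ((q : ℚ) - 1) * c₀ = z) ∧ (∃ z : ℤ, ((q : ℚ) - 1) * c₁ = z) ∧
    (∃ z : ℤ, c₀ + c₁ = z) ∧
    S = {n : ℤ | ∃ f : ℕ, (n : ℚ) = c₀ + c₁ * (q : ℚ) ^ f}

lemma finite_union_singletons (S : Set ℤ) (h : S.Finite) :
    ∃ (m : ℕ) (T : Fin m → Set ℤ), (∀ i, ∃ z : ℤ, T i = {z}) ∧ S = ⋃ i, T i := by
  classical
  obtain ⟨s, hs⟩ : ∃ s : Finset ℤ, ↑s = S := ⟨h.toFinset, h.coe_toFinset⟩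
  refine ⟨s.toList.length, fun i => {s.toList.get i}, fun i => ⟨_, rfl⟩, ?_⟩
  ext z
  simp only [Set.mem_iUnion, Set.mem_singleton_iff, ← hs, Finset.mem_coe,
    ← Finset.mem_toList, List.mem_iff_get]
  exact ⟨fun ⟨i, hi⟩ => ⟨i, hi.symm⟩, fun ⟨i, hi⟩ => ⟨i, hi.symm⟩⟩

/-- The intersection of two elementary `p`-nested sets of order 1 in `ℤ` is a
finite union of singletons and elementary `p`-nested sets of order at most 1. -/
theorem elemNested_inter_elemNested (p q : ℕ) (hp : p.Prime) (e : ℕ)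
    (hq : q = p ^ e) (hq1 : 1 < q) (c₀ c₁ d₀ d₁ : ℚ)
    (hc₀ : ∃ z : ℤ, ((q : ℚ) - 1) * c₀ = z) (hc₁ : ∃ z : ℤ, ((q : ℚ) - 1) * c₁ = z)
    (hcsum : ∃ z : ℤ, c₀ + c₁ = z) (hc₁0 : c₁ ≠ 0)
    (hd₀ : ∃ z : ℤ, ((q : ℚ) - 1) * d₀ = z) (hd₁ : ∃ z : ℤ, ((q : ℚ) - 1) * d₁ = z)
    (hdsum : ∃ z : ℤ, d₀ + d₁ = z) (hd₁0 : d₁ ≠ 0)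
    (S₁ S₂ : Set ℤ)
    (hS₁ : S₁ = {n : ℤ | ∃ f : ℕ, (n : ℚ) = c₀ + c₁ * (q : ℚ) ^ f})
    (hS₂ : S₂ = {n : ℤ | ∃ g : ℕ, (n : ℚ) = d₀ + d₁ * (q : ℚ) ^ g}) :
    ∃ (m : ℕ) (T : Fin m → Set ℤ),
      (∀ i, (∃ z : ℤ, T i = {z}) ∨ IsElemNestedOne q (T i)) ∧
      S₁ ∩ S₂ = ⋃ i, T i := by
  classical
  obtain ⟨a0, ha0⟩ := id hc₀
  obtain ⟨a1, ha1⟩ := id hc₁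
  obtain ⟨b0, hb0⟩ := id hd₀
  obtain ⟨b1, hb1⟩ := id hd₁
  have hq2 : (2 : ℤ) ≤ (q : ℤ) := by exact_mod_cast hq1
  have hqQ : (1 : ℚ) < q := by exact_mod_cast hq1
  have hq0 : ((q : ℚ) - 1) ≠ 0 := by linarith
  have key : ∀ (f g : ℕ), c₀ + c₁ * (q : ℚ) ^ f = d₀ + d₁ * (q : ℚ) ^ g →
      a0 + a1 * (q : ℤ) ^ f = b0 + b1 * (q : ℤ) ^ g := by
    intro f g h
    have h2 : ((a0 + a1 * (q : ℤ) ^ f : ℤ) : ℚ) = ((b0 + b1 * (q : ℤ) ^ g : ℤ) : ℚ) := by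
      push_cast
      linear_combination ((q : ℚ) - 1) * h - ha0 - (q : ℚ) ^ f * ha1 + hb0 + (q : ℚ) ^ g * hb1
    exact_mod_cast h2
  by_cases h1 : a0 = b0 ∧ ∃ k : ℕ, b1 = a1 * (q : ℤ) ^ k
  · obtain ⟨heq0, k, hk⟩ := h1
    have hc0d0 : c₀ = d₀ := by
      apply mul_left_cancel₀ hq0
      rw [ha0, hb0, heq0]
    have hkQ : (b1 : ℚ) = (a1 : ℚ) * (q : ℚ) ^ k := by exact_mod_cast hk
    have hd1 : d₁ = c₁ * (q : ℚ) ^ k := by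
      apply mul_left_cancel₀ hq0
      linear_combination hb1 - (q : ℚ) ^ k * ha1 + hkQ
    have hsub : S₂ ⊆ S₁ := by
      rw [hS₁, hS₂]
      rintro n ⟨g, hn⟩
      exact ⟨g + k, by rw [hn, hc0d0, hd1]; ring⟩
    refine ⟨1, fun _ => S₂, fun i => Or.inr ⟨d₀, d₁, hd₀, hd₁, hdsum, hS₂⟩, ?_⟩
    rw [Set.inter_eq_right.mpr hsub, Set.iUnion_const]
  by_cases h2 : a0 = b0 ∧ ∃ k : ℕ, a1 = b1 * (q : ℤ) ^ k
  · obtain ⟨heq0, k, hk⟩ := h2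
    have hc0d0 : c₀ = d₀ := by
      apply mul_left_cancel₀ hq0
      rw [ha0, hb0, heq0]
    have hkQ : (a1 : ℚ) = (b1 : ℚ) * (q : ℚ) ^ k := by exact_mod_cast hk
    have hc1 : c₁ = d₁ * (q : ℚ) ^ k := by
      apply mul_left_cancel₀ hq0
      linear_combination ha1 - (q : ℚ) ^ k * hb1 + hkQ
    have hsub : S₁ ⊆ S₂ := by
      rw [hS₁, hS₂]
      rintro n ⟨f, hn⟩
      exact ⟨f + k, by rw [hn, hc0d0, hc1]; ring⟩
    refine ⟨1, fun _ => S₁, fun i => Or.inr ⟨c₀, c₁, hc₀, hc₁, hcsum, hS₁⟩, ?_⟩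
    rw [Set.inter_eq_left.mpr hsub, Set.iUnion_const]
  have hqz : (0 : ℤ) < (q : ℤ) := by linarith
  have h2pow : ∀ m : ℕ, (m : ℤ) < (q : ℤ) ^ m := by
    intro m
    calc (m : ℤ) < (2 : ℤ) ^ m := by exact_mod_cast (Nat.lt_two_pow_self (n := m))
    _ ≤ (q : ℤ) ^ m := pow_le_pow_left₀ (by norm_num) hq2 m
  by_cases hC : a0 = b0
  · -- empty intersection
    have hempty : S₁ ∩ S₂ = ∅ := by
      rw [hS₁, hS₂]
      ext n
      simp only [Set.mem_inter_iff, Set.mem_setOf_eq, Set.mem_empty_iff_false, iff_false,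
        not_and]
      rintro ⟨f, hf⟩ ⟨g, hg⟩
      have heq := key f g (hf.symm.trans hg)
      rw [hC] at heq
      have h3 : a1 * (q : ℤ) ^ f = b1 * (q : ℤ) ^ g := by linarith
      rcases le_total g f with hgf | hfg
      · apply h1
        refine ⟨hC, f - g, ?_⟩
        have hqg : ((q : ℤ)) ^ g ≠ 0 := pow_ne_zero _ (by positivity)
        apply mul_right_cancel₀ hqg
        calc b1 * (q : ℤ) ^ g = a1 * (q : ℤ) ^ f := h3.symm
          _ = a1 * (q : ℤ) ^ (f - g) * (q : ℤ) ^ g := by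
              rw [mul_assoc, ← pow_add, Nat.sub_add_cancel hgf]
      · apply h2
        refine ⟨hC, g - f, ?_⟩
        have hqf : ((q : ℤ)) ^ f ≠ 0 := pow_ne_zero _ (by positivity)
        apply mul_right_cancel₀ hqf
        calc a1 * (q : ℤ) ^ f = b1 * (q : ℤ) ^ g := h3
          _ = b1 * (q : ℤ) ^ (g - f) * (q : ℤ) ^ f := by
              rw [mul_assoc, ← pow_add, Nat.sub_add_cancel hfg]
    refine ⟨0, fun i => ∅, fun i => i.elim0, ?_⟩
    rw [hempty]
    simp
  · -- finite intersection
    have ha1ne : a1 ≠ 0 := by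
      intro h
      apply hc₁0
      rw [h] at ha1
      push_cast at ha1
      exact (mul_eq_zero.mp ha1).resolve_left hq0
    have hCne : b0 - a0 ≠ 0 := sub_ne_zero.mpr (Ne.symm hC)
    set M : ℕ := (b0 - a0).natAbs with hM
    set N : ℕ := M + b1.natAbs * q ^ M with hN
    have habs : (0 : ℤ) < |b0 - a0| := abs_pos.mpr hCne
    have hfin : (S₁ ∩ S₂).Finite := by
      have hsub : S₁ ∩ S₂ ⊆ (fun f : ℕ => (⌊c₀ + c₁ * (q : ℚ) ^ f⌋ : ℤ)) '' (Set.Iic N) := by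
        rintro n ⟨hn1, hn2⟩
        rw [hS₁] at hn1; rw [hS₂] at hn2
        obtain ⟨f, hf⟩ := hn1
        obtain ⟨g, hg⟩ := hn2
        refine ⟨f, ?_, ?_⟩
        swap
        · show ⌊c₀ + c₁ * (q : ℚ) ^ f⌋ = n
          rw [← hf]; exact Int.floor_intCast n
        have heq := key f g (hf.symm.trans hg)
        rcases le_total f g with hfg | hgf
        · -- q^f ∣ b0 - a0
          have hdvd : (q : ℤ) ^ f ∣ (b0 - a0) := by
            refine ⟨a1 - b1 * (q : ℤ) ^ (g - f), ?_⟩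
            have hpow : (q : ℤ) ^ g = (q : ℤ) ^ f * (q : ℤ) ^ (g - f) := by
              rw [← pow_add, Nat.add_sub_cancel' hfg]
            rw [hpow] at heq
            ring_nf
            ring_nf at heq
            linarith
          have hle : (q : ℤ) ^ f ≤ |b0 - a0| := Int.le_of_dvd habs ((dvd_abs _ _).mpr hdvd)
          have hfM : (f : ℤ) < (M : ℤ) := by
            calc (f : ℤ) < (q : ℤ) ^ f := h2pow f
            _ ≤ |b0 - a0| := hle
            _ = (M : ℤ) := by rw [hM, Int.abs_eq_natAbs]
          have : f < M := by exact_mod_cast hfM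
          simp only [Set.mem_Iic, hN]
          omega
        · -- q^g ∣ b0 - a0, then bound f
          have hdvd : (q : ℤ) ^ g ∣ (b0 - a0) := by
            refine ⟨a1 * (q : ℤ) ^ (f - g) - b1, ?_⟩
            have hpow : (q : ℤ) ^ f = (q : ℤ) ^ g * (q : ℤ) ^ (f - g) := by
              rw [← pow_add, Nat.add_sub_cancel' hgf]
            rw [hpow] at heq
            ring_nf
            ring_nf at heq
            linarith
          have hle : (q : ℤ) ^ g ≤ |b0 - a0| := Int.le_of_dvd habs ((dvd_abs _ _).mpr hdvd)
          have hgM : (g : ℤ) < (M : ℤ) := by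
            calc (g : ℤ) < (q : ℤ) ^ g := h2pow g
            _ ≤ |b0 - a0| := hle
            _ = (M : ℤ) := by rw [hM, Int.abs_eq_natAbs]
          have hgM' : g < M := by exact_mod_cast hgM
          have ha1f : a1 * (q : ℤ) ^ f = (b0 - a0) + b1 * (q : ℤ) ^ g := by linarith
          have hbound : (q : ℤ) ^ f ≤ (N : ℤ) := by
            have h1a : (q : ℤ) ^ f ≤ |a1| * (q : ℤ) ^ f := by
              have : (1 : ℤ) ≤ |a1| := Int.one_le_abs ha1ne
              nlinarith [pow_pos hqz f]
            have h1b : |a1| * (q : ℤ) ^ f = |a1 * (q : ℤ) ^ f| := by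
              rw [abs_mul, abs_of_pos (pow_pos hqz f)]
            have h1c : |(b0 - a0) + b1 * (q : ℤ) ^ g| ≤ |b0 - a0| + |b1| * (q : ℤ) ^ g := by
              calc |(b0 - a0) + b1 * (q : ℤ) ^ g| ≤ |b0 - a0| + |b1 * (q : ℤ) ^ g| :=
                abs_add_le _ _
              _ = |b0 - a0| + |b1| * (q : ℤ) ^ g := by
                  rw [abs_mul, abs_of_pos (pow_pos hqz g)]
            have h1d : (q : ℤ) ^ g ≤ (q : ℤ) ^ M :=
              pow_le_pow_right₀ (by linarith) (le_of_lt hgM')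
            have h1e : |b1| * (q : ℤ) ^ g ≤ |b1| * (q : ℤ) ^ M := by
              have : (0 : ℤ) ≤ |b1| := abs_nonneg _
              nlinarith
            have hNZ : (N : ℤ) = (M : ℤ) + |b1| * (q : ℤ) ^ M := by
              rw [hN, Int.abs_eq_natAbs]
              push_cast
              ring
            have hMeq : |b0 - a0| = (M : ℤ) := by rw [hM, Int.abs_eq_natAbs]
            calc (q : ℤ) ^ f ≤ |a1| * (q : ℤ) ^ f := h1a
            _ = |a1 * (q : ℤ) ^ f| := h1b
            _ = |(b0 - a0) + b1 * (q : ℤ) ^ g| := by rw [ha1f]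
            _ ≤ |b0 - a0| + |b1| * (q : ℤ) ^ g := h1c
            _ ≤ |b0 - a0| + |b1| * (q : ℤ) ^ M := by linarith
            _ = (N : ℤ) := by rw [hMeq, hNZ]
          have hfN : (f : ℤ) < (N : ℤ) := lt_of_lt_of_le (h2pow f) hbound
          have : f < N := by exact_mod_cast hfN
          simp only [Set.mem_Iic]
          omega
      exact ((Set.finite_Iic N).image _).subset hsub
    obtain ⟨m, T, hT, hTeq⟩ := finite_union_singletons _ hfin
    exact ⟨m, T, fun i => Or.inl (hT i), hTeq⟩
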